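/- Let G be a bipartite graph with parts A_G and B_G and edge set E_G, and consider the Hamming-construction election from G: the candidate set is A_G ∪ B_G; there are |A_G| voters each approving exactly A_G; |A_G| voters each approving exactly B_G; for every x ∈ A_G a voter v_x approving exactly {x} ∪ (B_G \ N(x)), where N(x) is the set of neighbors of x in G; and |A_G| degree-correcting voters, each approving no candidate from A_G, such that every y ∈ B_G is approved by exactly deg(y) of the degree-correcting voters (this is possible since deg(y) ≤ |A_G|). Then for every x ∈ A_G and y ∈ B_G: if (x,y) ∈ E_G then ham(x,y) = 3·|A_G| + 1, and if (x,y) ∉ E_G then ham(x,y) = 3·|A_G| − 1. -/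

import Mathlib

open scoped Classical

/-- The set of voters approving candidate `c`. -/
noncomputable def approvers {V C : Type*} [Fintype V] (app : V → C → Prop) (c : C) :
    Finset V :=
  Finset.univ.filter fun v => app v c

/-- The Hamming distance between two candidates: the number of voters approving
exactly one of them. -/
noncomputable def ham {V C : Type*} [Fintype V] (app : V → C → Prop) (c d : C) : ℕ :=
  (approvers app c \ approvers app d).card + (approvers app d \ approvers app c).card

/-- The approval relation of the Hamming-construction election from a bipartite graph
with parts `A`, `B` and edge relation `E`. The voters are indexed by `A ⊕ A ⊕ A ⊕ A`:
`|A|` voters each approving exactly `A_G`; `|A|` voters each approving exactly `B_G`;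
for every `x ∈ A_G` a voter `v_x` approving exactly `{x} ∪ (B_G \ N(x))`; and `|A|`
degree-correcting voters, approving no candidate from `A_G`, whose approvals of
candidates in `B_G` are given by a relation `dc`. -/
def hamApp {A B : Type*} (E dc : A → B → Prop) :
    (A ⊕ A ⊕ A ⊕ A) → (A ⊕ B) → Prop
  | Sum.inl _, Sum.inl _ => True
  | Sum.inl _, Sum.inr _ => False
  | Sum.inr (Sum.inl _), Sum.inl _ => False
  | Sum.inr (Sum.inl _), Sum.inr _ => True
  | Sum.inr (Sum.inr (Sum.inl x)), Sum.inl a => a = x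
  | Sum.inr (Sum.inr (Sum.inl x)), Sum.inr b => ¬ E x b
  | Sum.inr (Sum.inr (Sum.inr _)), Sum.inl _ => False
  | Sum.inr (Sum.inr (Sum.inr a)), Sum.inr b => dc a b


/-- Counting a filter on a sum type decomposes as a sum of counts. -/
lemma card_filter_sum {α β : Type*} [Fintype α] [Fintype β] (p : α ⊕ β → Prop)
    [DecidablePred p] [DecidablePred fun a : α => p (Sum.inl a)]
    [DecidablePred fun b : β => p (Sum.inr b)] :
    (Finset.univ.filter p).card =
      (Finset.univ.filter fun a : α => p (Sum.inl a)).card +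
      (Finset.univ.filter fun b : β => p (Sum.inr b)).card := by
  classical
  rw [← Fintype.card_subtype, ← Fintype.card_subtype, ← Fintype.card_subtype,
    ← Fintype.card_sum]
  exact Fintype.card_congr Equiv.subtypeSum

/-- In the Hamming-construction election (where every `y ∈ B_G` is approved by exactly
`deg(y)` degree-correcting voters), for `x ∈ A_G` and `y ∈ B_G`: if `(x, y)` is an edge
then `ham(x, y) = 3|A_G| + 1`, and otherwise `ham(x, y) = 3|A_G| - 1`. -/
theorem ham_cross_side {A B : Type*} [Fintype A] [Fintype B] (E dc : A → B → Prop)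
    (hdc : ∀ b : B, (Finset.univ.filter fun a : A => dc a b).card =
      (Finset.univ.filter fun a : A => E a b).card)
    (x : A) (y : B) :
    (E x y → ham (hamApp E dc) (Sum.inl x) (Sum.inr y) = 3 * Fintype.card A + 1) ∧
    (¬ E x y → ham (hamApp E dc) (Sum.inl x) (Sum.inr y) = 3 * Fintype.card A - 1) := by
  classical
  have happ : ham (hamApp E dc) (Sum.inl x) (Sum.inr y) =
      (Finset.univ.filter fun v => hamApp E dc v (Sum.inl x) ∧
        ¬ hamApp E dc v (Sum.inr y)).card +
      (Finset.univ.filter fun v => hamApp E dc v (Sum.inr y) ∧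
        ¬ hamApp E dc v (Sum.inl x)).card := by
    unfold ham approvers
    congr 1 <;> · congr 1; ext v; simp [Finset.mem_sdiff, Finset.mem_filter]
  have hdeg : (Finset.univ.filter fun a : A => E a y).card ≤ Fintype.card A := by
    simpa using Finset.card_filter_le Finset.univ (fun a : A => E a y)
  have c1 : (Finset.univ.filter fun a : A =>
      hamApp E dc (Sum.inl a) (Sum.inl x) ∧
        ¬ hamApp E dc (Sum.inl a) (Sum.inr y)).card = Fintype.card A := by
    simp [hamApp]
  have c2 : (Finset.univ.filter fun a : A =>
      hamApp E dc (Sum.inr (Sum.inl a)) (Sum.inl x) ∧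
        ¬ hamApp E dc (Sum.inr (Sum.inl a)) (Sum.inr y)).card = 0 := by
    simp [hamApp]
  have c3 : (Finset.univ.filter fun a : A =>
      hamApp E dc (Sum.inr (Sum.inr (Sum.inl a))) (Sum.inl x) ∧
        ¬ hamApp E dc (Sum.inr (Sum.inr (Sum.inl a))) (Sum.inr y)).card =
      if E x y then 1 else 0 := by
    by_cases hE : E x y
    · rw [if_pos hE]
      have : (Finset.univ.filter fun a : A =>
          hamApp E dc (Sum.inr (Sum.inr (Sum.inl a))) (Sum.inl x) ∧
            ¬ hamApp E dc (Sum.inr (Sum.inr (Sum.inl a))) (Sum.inr y)) = {x} := by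
        ext a
        simp only [hamApp, Finset.mem_filter, Finset.mem_univ, true_and, not_not,
          Finset.mem_singleton]
        constructor
        · exact fun h => h.1.symm
        · rintro rfl; exact ⟨rfl, hE⟩
      rw [this, Finset.card_singleton]
    · rw [if_neg hE]
      have : (Finset.univ.filter fun a : A =>
          hamApp E dc (Sum.inr (Sum.inr (Sum.inl a))) (Sum.inl x) ∧
            ¬ hamApp E dc (Sum.inr (Sum.inr (Sum.inl a))) (Sum.inr y)) = ∅ := by
        ext a
        simp only [hamApp, Finset.mem_filter, Finset.mem_univ, true_and, not_not,
          Finset.notMem_empty, iff_false, not_and]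
        rintro rfl h
        exact hE h
      rw [this, Finset.card_empty]
  have c4 : (Finset.univ.filter fun a : A =>
      hamApp E dc (Sum.inr (Sum.inr (Sum.inr a))) (Sum.inl x) ∧
        ¬ hamApp E dc (Sum.inr (Sum.inr (Sum.inr a))) (Sum.inr y)).card = 0 := by
    simp [hamApp]
  have c5 : (Finset.univ.filter fun a : A =>
      hamApp E dc (Sum.inl a) (Sum.inr y) ∧
        ¬ hamApp E dc (Sum.inl a) (Sum.inl x)).card = 0 := by
    simp [hamApp]
  have c6 : (Finset.univ.filter fun a : A =>
      hamApp E dc (Sum.inr (Sum.inl a)) (Sum.inr y) ∧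
        ¬ hamApp E dc (Sum.inr (Sum.inl a)) (Sum.inl x)).card = Fintype.card A := by
    simp [hamApp]
  have hnot : (Finset.univ.filter fun a : A => ¬ E a y).card =
      Fintype.card A - (Finset.univ.filter fun a : A => E a y).card := by
    rw [Finset.filter_not, Finset.card_sdiff_of_subset (Finset.filter_subset _ _), Finset.card_univ]
  have c7 : (Finset.univ.filter fun a : A =>
      hamApp E dc (Sum.inr (Sum.inr (Sum.inl a))) (Sum.inr y) ∧
        ¬ hamApp E dc (Sum.inr (Sum.inr (Sum.inl a))) (Sum.inl x)).card =
      if E x y then Fintype.card A - (Finset.univ.filter fun a : A => E a y).card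
      else Fintype.card A - (Finset.univ.filter fun a : A => E a y).card - 1 := by
    by_cases hE : E x y
    · rw [if_pos hE, ← hnot]
      congr 1
      ext a
      rw [Finset.mem_filter, Finset.mem_filter]
      simp only [hamApp, Finset.mem_filter, Finset.mem_univ, true_and,
        and_iff_left_iff_imp]
      intro h h'
      exact h (h' ▸ hE)
    · rw [if_neg hE, ← hnot]
      have hx : x ∈ Finset.univ.filter fun a : A => ¬ E a y := by simp [hE]
      have heq : (Finset.univ.filter fun a : A =>
          hamApp E dc (Sum.inr (Sum.inr (Sum.inl a))) (Sum.inr y) ∧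
            ¬ hamApp E dc (Sum.inr (Sum.inr (Sum.inl a))) (Sum.inl x)) =
          (Finset.univ.filter fun a : A => ¬ E a y) \ {x} := by
        ext a
        rw [Finset.mem_filter]
        simp only [hamApp, Finset.mem_filter, Finset.mem_univ, true_and,
          Finset.mem_sdiff, Finset.mem_singleton, eq_comm]
      rw [heq, Finset.card_sdiff_of_subset (by simpa using hx), Finset.card_singleton]
  have c8 : (Finset.univ.filter fun a : A =>
      hamApp E dc (Sum.inr (Sum.inr (Sum.inr a))) (Sum.inr y) ∧
        ¬ hamApp E dc (Sum.inr (Sum.inr (Sum.inr a))) (Sum.inl x)).card =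
      (Finset.univ.filter fun a : A => E a y).card := by
    rw [← hdc y]
    congr 1
    ext a
    simp [hamApp]
  rw [happ, card_filter_sum, card_filter_sum, card_filter_sum,
    card_filter_sum, card_filter_sum, card_filter_sum, c1, c2, c3, c4, c5, c6, c7, c8]
  constructor
  · intro hE
    rw [if_pos hE, if_pos hE]
    omega
  · intro hE
    rw [if_neg hE, if_neg hE]
    have h5 : 1 ≤ Fintype.card A - (Finset.univ.filter fun a : A => E a y).card := by
      have hx : x ∈ Finset.univ.filter fun a : A => ¬ E a y := by simp [hE]
      have := Finset.card_pos.mpr ⟨x, hx⟩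
      omega
    omega
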